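/- Let p₁(z) = z⁴ − z³ − 4z − 8. Then p₁ has a real root λ₁ with 2.34 < λ₁ < 2.35, and λ₁ is strictly larger in absolute value than every other complex root of p₁. -/

import Mathlib

set_option maxHeartbeats 1000000 in
theorem p1_dominant_root :
    ∃ lam : ℝ, lam ^ 4 - lam ^ 3 - 4 * lam - 8 = 0 ∧
      2.34 < lam ∧ lam < 2.35 ∧
      ∀ z : ℂ, z ^ 4 - z ^ 3 - 4 * z - 8 = 0 → z ≠ (lam : ℂ) → ‖z‖ < lam := by
  obtain ⟨lam, hmem, hroot⟩ :
      ∃ lam ∈ Set.Ioo (2.34:ℝ) 2.35, lam ^ 4 - lam ^ 3 - 4 * lam - 8 = 0 := by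
    have hc : ContinuousOn (fun x : ℝ => x ^ 4 - x ^ 3 - 4 * x - 8) (Set.Icc 2.34 2.35) :=
      (by continuity : Continuous fun x : ℝ => x ^ 4 - x ^ 3 - 4 * x - 8).continuousOn
    have h := intermediate_value_Ioo (by norm_num : (2.34:ℝ) ≤ 2.35) hc
    have h0 : (0:ℝ) ∈ Set.Ioo ((fun x : ℝ => x ^ 4 - x ^ 3 - 4 * x - 8) 2.34)
        ((fun x : ℝ => x ^ 4 - x ^ 3 - 4 * x - 8) 2.35) := by
      constructor <;> norm_num
    obtain ⟨lam, hl, he⟩ := h h0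
    exact ⟨lam, hl, he⟩
  obtain ⟨h1, h2⟩ := hmem
  refine ⟨lam, hroot, h1, h2, ?_⟩
  intro z hz hne
  by_contra hge
  push_neg at hge
  set r := ‖z‖ with hrdef
  have hz4 : z ^ 4 = z ^ 3 + 4 * z + 8 := by linear_combination hz
  have hleq : lam ^ 4 = lam ^ 3 + 4 * lam + 8 := by linarith
  have hr0 : 0 ≤ r := norm_nonneg z
  have t1 : r ^ 4 ≤ r ^ 3 + 4 * r + 8 := by
    have h4 : ‖z ^ 4‖ ≤ r ^ 3 + 4 * r + 8 := by
      rw [hz4]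
      calc ‖z ^ 3 + 4 * z + 8‖
          ≤ ‖z ^ 3 + 4 * z‖ + ‖(8:ℂ)‖ := norm_add_le _ _
        _ ≤ ‖z ^ 3‖ + ‖4 * z‖ + ‖(8:ℂ)‖ :=
            add_le_add_left (norm_add_le _ _) _
        _ = r ^ 3 + 4 * r + 8 := by
            simp [norm_pow, norm_mul, hrdef]
    simpa [norm_pow] using h4
  have hrle : r ≤ lam := by
    by_contra hgt
    push_neg at hgt
    have hr' : 2.34 < r := lt_trans h1 hgt
    have hbr : 0 < r ^ 3 + r ^ 2 * lam + r * lam ^ 2 + lam ^ 3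
        - r ^ 2 - r * lam - lam ^ 2 - 4 := by
      nlinarith [hr', h1, mul_pos (show (0:ℝ) < r by linarith) (show (0:ℝ) < lam by linarith),
        mul_pos (show (0:ℝ) < r by linarith) (show (0:ℝ) < r by linarith),
        mul_pos (show (0:ℝ) < lam by linarith) (show (0:ℝ) < lam by linarith)]
    have hprod := mul_pos (sub_pos.2 hgt) hbr
    nlinarith [hprod, t1, hleq]
  have hreq : r = lam := le_antisymm hrle hge
  -- key: |z^3 + 4z| = lam^3 + 4 lam
  have k1 : ‖z ^ 3 + 4 * z‖ ≤ lam ^ 3 + 4 * lam := by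
    calc ‖z ^ 3 + 4 * z‖
        ≤ ‖z ^ 3‖ + ‖4 * z‖ := norm_add_le _ _
      _ = lam ^ 3 + 4 * lam := by
          simp [norm_pow, norm_mul, ← hrdef, hreq]
  have k2 : lam ^ 3 + 4 * lam ≤ ‖z ^ 3 + 4 * z‖ := by
    have h8 : z ^ 3 + 4 * z = z ^ 4 - 8 := by linear_combination -hz
    rw [h8]
    have hsub := norm_sub_norm_le (z ^ 4) (8 : ℂ)
    simp only [norm_pow] at hsub
    have h8a : ‖(8 : ℂ)‖ = 8 := by norm_num
    rw [h8a, ← hrdef, hreq] at hsub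
    linarith
  have keq : ‖z ^ 3 + 4 * z‖ = lam ^ 3 + 4 * lam := le_antisymm k1 k2
  -- move to coordinates
  set x := z.re with hxdef
  set y := z.im with hydef
  have hs : x ^ 2 + y ^ 2 = lam ^ 2 := by
    have h := Complex.sq_norm z
    rw [← hrdef, hreq, Complex.normSq_apply] at h
    nlinarith [h]
  have hnq : (x ^ 3 - 3 * x * y ^ 2 + 4 * x) ^ 2 + (3 * x ^ 2 * y - y ^ 3 + 4 * y) ^ 2
      = (lam ^ 3 + 4 * lam) ^ 2 := by
    have h := Complex.sq_norm (z ^ 3 + 4 * z)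
    rw [keq, Complex.normSq_apply] at h
    have hre : (z ^ 3 + 4 * z).re = x ^ 3 - 3 * x * y ^ 2 + 4 * x := by
      simp only [Complex.add_re, Complex.mul_re, Complex.mul_im, pow_succ, pow_zero, one_mul,
        Complex.one_re, Complex.one_im, Complex.re_ofNat, Complex.im_ofNat, ← hxdef, ← hydef]
      ring
    have him : (z ^ 3 + 4 * z).im = 3 * x ^ 2 * y - y ^ 3 + 4 * y := by
      simp only [Complex.add_im, Complex.mul_re, Complex.mul_im, pow_succ, pow_zero, one_mul,
        Complex.one_re, Complex.one_im, Complex.re_ofNat, Complex.im_ofNat, ← hxdef, ← hydef]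
      ring
    rw [hre, him] at h
    nlinarith [h]
  have hkey : 16 * y ^ 2 * (x ^ 2 + y ^ 2) = 0 := by
    linear_combination (-(1:ℝ)) * hnq
      + ((x ^ 2 + y ^ 2 + 4) ^ 2 + lam ^ 2 * (x ^ 2 + y ^ 2 + lam ^ 2 + 8)) * hs
  have hy2 : y ^ 2 ≤ 0 := by
    nlinarith [hkey, mul_nonneg (sq_nonneg y)
      (show (0:ℝ) ≤ x ^ 2 + y ^ 2 - 5 by nlinarith [hs, h1])]
  have hy : y = 0 := by
    have h := le_antisymm hy2 (sq_nonneg y)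
    exact (pow_eq_zero_iff two_ne_zero).mp h
  have hzx : z = (x : ℂ) := by
    apply Complex.ext
    · simp [← hxdef]
    · simp [← hydef, hy]
  have hxreal : x ^ 4 - x ^ 3 - 4 * x - 8 = 0 := by
    have hc : ((x ^ 4 - x ^ 3 - 4 * x - 8 : ℝ) : ℂ) = 0 := by
      push_cast
      rw [← hzx]
      linear_combination hz
    exact_mod_cast hc
  have hx2 : x ^ 2 = lam ^ 2 := by
    rw [hy] at hs; linarith
  have hcase : (x - lam) * (x + lam) = 0 := by linear_combination hx2
  rcases mul_eq_zero.mp hcase with hc1 | hc2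
  · apply hne
    rw [hzx]
    norm_cast
    linarith
  · have hxneg : x = -lam := by linarith
    rw [hxneg] at hxreal
    nlinarith [hxreal, hleq, h1]
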